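/- Let (f^* : A ⥤ B, g^* : C ⥤ D, h : A ⥤ C, k : B ⥤ D) together with right adjoints f_* of f^* and g_* of g^* and a natural isomorphism α : k ∘ f^* ≅ g^* ∘ h form a horizontally right adjointable square. If an object Y of B is k-local, then f_* Y is h-local. -/

import Mathlib

/-!
A horizontally right adjointable square consists of adjunctions `f^* ⊣ f_*` and `g^* ⊣ g_*`,
vertical functors `h`, `k`, and a natural isomorphism `α : k ∘ f^* ≅ g^* ∘ h` whose mate
`h ∘ f_* ⟶ g_* ∘ k` (given by `mateEquiv`) is a natural isomorphism.  If `Y` is `k`-local,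
then `f_* Y` is `h`-local.
-/

open CategoryTheory

universe v₁ v₂ v₃ v₄ u₁ u₂ u₃ u₄

/-- `X` is `F`-local if `F` induces a bijection `Hom(Z, X) → Hom(F Z, F X)` for all `Z`. -/
def Local {C : Type u₁} {D : Type u₂} [Category.{v₁} C] [Category.{v₂} D]
    (F : C ⥤ D) (X : C) : Prop :=
  ∀ Z : C, Function.Bijective (fun f : Z ⟶ X => F.map f)

theorem stmt6 {A : Type u₁} {B : Type u₂} {C : Type u₃} {D : Type u₄}
    [Category.{v₁} A] [Category.{v₂} B] [Category.{v₃} C] [Category.{v₄} D]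
    (fstar : A ⥤ B) (fpush : B ⥤ A) (adjf : fstar ⊣ fpush)
    (gstar : C ⥤ D) (gpush : D ⥤ C) (adjg : gstar ⊣ gpush)
    (h : A ⥤ C) (k : B ⥤ D) (α : fstar ⋙ k ≅ h ⋙ gstar)
    (hmate : IsIso (mateEquiv adjf adjg α.inv))
    (Y : B) (hY : Local k Y) :
    Local h (fpush.obj Y) := by
  intro Z
  set μ := mateEquiv adjf adjg α.inv with hμ
  haveI : IsIso (μ.app Y) := by haveI := hmate; exact NatIso.isIso_app_of_isIso μ Y
  let e : (Z ⟶ fpush.obj Y) ≃ (h.obj Z ⟶ h.obj (fpush.obj Y)) :=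
    ((adjf.homEquiv Z Y).symm).trans <|
    (Equiv.ofBijective _ (hY (fstar.obj Z))).trans <|
    (Iso.homCongr (α.app Z) (Iso.refl (k.obj Y))).trans <|
    (adjg.homEquiv (h.obj Z) (k.obj Y)).trans <|
    (Iso.homCongr (Iso.refl (h.obj Z)) (asIso (μ.app Y)).symm)
  have key : ∀ f : Z ⟶ fpush.obj Y, e f = h.map f := by
    intro f
    simp only [e, Equiv.trans_apply, Iso.homCongr_apply, Iso.refl_hom, Iso.refl_inv,
      Equiv.ofBijective_apply, Category.id_comp, Iso.symm_hom, asIso_inv]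
    rw [IsIso.comp_inv_eq]
    simp only [hμ, mateEquiv, Adjunction.homEquiv, Equiv.coe_fn_mk, Equiv.coe_fn_symm_mk,
      Iso.homCongr_apply, Iso.refl_hom, Category.comp_id, Functor.whiskerLeft_app, Functor.whiskerRight_app,
      NatTrans.comp_app, Functor.comp_obj, Functor.comp_map, Functor.map_comp, Category.assoc]
    rw [Iso.app_inv, ← gpush.map_comp_assoc, ← Functor.comp_map fstar k, ← α.inv.naturality f]
    simp [Functor.comp_map, ← adjg.unit.naturality_assoc]
  have : (fun f : Z ⟶ fpush.obj Y => h.map f) = e := by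
    funext f; exact (key f).symm
  rw [this]
  exact e.bijective
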